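/- Hessian determinant at the last-layer padded point (case i): let p ≥ 1 and let (β⋆,γ⋆) ∈ ℝ^p × ℝ^p be a critical point of E_p. Let H_p denote the Hessian of E_p at (β⋆,γ⋆), let H_{p+1} denote the Hessian of E_{p+1} at the padded point Γ^{p+1}(p+1,p+1), and set b = ∂²E_{p+1}/∂β_{p+1}∂γ_{p+1} evaluated at Γ^{p+1}(p+1,p+1). Then b = ⟨β⋆,γ⋆| [[H_B, H_C], H_C] |β⋆,γ⋆⟩ (where |β⋆,γ⋆⟩ is the depth-p QAOA state), ∂²E_{p+1}/∂γ_{p+1}² vanishes at Γ^{p+1}(p+1,p+1), and if b ≠ 0 then det H_{p+1} = -b² · det H_p. -/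

import Mathlib

open Matrix Complex

noncomputable section

/-- Computational basis index set for `n` qubits, identified with `Fin 2 ^ n` via binary digits. -/
abbrev QIdx (n : ℕ) := Fin n → Fin 2

/-- The Pauli X matrix. -/
def pauliX : Matrix (Fin 2) (Fin 2) ℂ := !![0, 1; 1, 0]

/-- The Pauli Z matrix. -/
def pauliZ : Matrix (Fin 2) (Fin 2) ℂ := !![1, 0; 0, -1]

/-- The `n`-fold Kronecker product with `M` in the `i`-th tensor factor and the 2×2 identity in
every other factor, realized as a matrix on `ℂ^(2^n)` with indices `Fin n → Fin 2`. -/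
def pauliAt {n : ℕ} (M : Matrix (Fin 2) (Fin 2) ℂ) (i : Fin n) :
    Matrix (QIdx n) (QIdx n) ℂ :=
  Matrix.of fun s t => ∏ j, if j = i then M (s j) (t j) else if s j = t j then 1 else 0

/-- `σ^x_i`. -/
def sigmaX {n : ℕ} (i : Fin n) : Matrix (QIdx n) (QIdx n) ℂ := pauliAt pauliX i

/-- `σ^z_i`. -/
def sigmaZ {n : ℕ} (i : Fin n) : Matrix (QIdx n) (QIdx n) ℂ := pauliAt pauliZ i

lemma sigmaZ_eq_diagonal {n : ℕ} (i : Fin n) :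
    sigmaZ i = Matrix.diagonal (fun s => pauliZ (s i) (s i)) := by
  ext s t
  simp only [sigmaZ, pauliAt, Matrix.of_apply, Matrix.diagonal_apply]
  by_cases h : s = t
  · subst h
    simp [Finset.prod_ite_eq']
  · rw [if_neg h]
    obtain ⟨j₀, hj₀⟩ := Function.ne_iff.mp h
    refine Finset.prod_eq_zero (Finset.mem_univ j₀) ?_
    by_cases hji : j₀ = i
    · subst hji
      rw [if_pos rfl]
      have hz : ∀ a b : Fin 2, a ≠ b → pauliZ a b = 0 := by
        intro a b hab
        fin_cases a <;> fin_cases b <;> simp_all [pauliZ]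
      exact hz _ _ hj₀
    · rw [if_neg hji, if_neg hj₀]

lemma sigmaZ_mul_comm {n : ℕ} (i j : Fin n) : sigmaZ i * sigmaZ j = sigmaZ j * sigmaZ i := by
  rw [sigmaZ_eq_diagonal, sigmaZ_eq_diagonal, Matrix.diagonal_mul_diagonal,
    Matrix.diagonal_mul_diagonal]
  ext s
  simp [mul_comm]

/-- The MaxCut Hamiltonian `H_C = Σ_{{i,j} ∈ E} σ^z_i σ^z_j`. -/
def hamC (n : ℕ) (G : SimpleGraph (Fin n)) [DecidableRel G.Adj] :
    Matrix (QIdx n) (QIdx n) ℂ :=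
  ∑ e ∈ G.edgeFinset,
    Sym2.lift ⟨fun i j => sigmaZ i * sigmaZ j, fun i j => sigmaZ_mul_comm i j⟩ e

/-- The mixing Hamiltonian `H_B = -Σ_i σ^x_i`. -/
def hamB (n : ℕ) : Matrix (QIdx n) (QIdx n) ℂ := -(∑ i : Fin n, sigmaX i)

/-- `U_B(β) = exp(-i β H_B)`. -/
def uB (n : ℕ) (β : ℝ) : Matrix (QIdx n) (QIdx n) ℂ :=
  NormedSpace.exp ((-(Complex.I) * (β : ℂ)) • hamB n)

/-- `U_C(γ) = exp(-i γ H_C)`. -/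
def uC (n : ℕ) (G : SimpleGraph (Fin n)) [DecidableRel G.Adj] (γ : ℝ) :
    Matrix (QIdx n) (QIdx n) ℂ :=
  NormedSpace.exp ((-(Complex.I) * (γ : ℂ)) • hamC n G)

/-- The plus state `|+⟩ = 2^{-n/2} (1,…,1)ᵀ`. -/
def plusState (n : ℕ) : QIdx n → ℂ := fun _ => ((Real.sqrt 2 : ℂ))⁻¹ ^ n

/-- The `m`-th layer `U_B(β_{m+1}) U_C(γ_{m+1})` of the QAOA circuit (`m` is 0-indexed);
`1` if `m` is out of range. -/
def qaoaLayer (n : ℕ) (G : SimpleGraph (Fin n)) [DecidableRel G.Adj] {p : ℕ}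
    (β γ : Fin p → ℝ) (m : ℕ) : Matrix (QIdx n) (QIdx n) ℂ :=
  if h : m < p then uB n (β ⟨m, h⟩) * uC n G (γ ⟨m, h⟩) else 1

/-- The ordered product of the (0-indexed) layers `a, a+1, …, a+len-1` of the QAOA circuit, with
higher layers acting later (to the left). -/
def uProd (n : ℕ) (G : SimpleGraph (Fin n)) [DecidableRel G.Adj] {p : ℕ}
    (β γ : Fin p → ℝ) (a len : ℕ) : Matrix (QIdx n) (QIdx n) ℂ :=
  (((List.range' a len).reverse).map (qaoaLayer n G β γ)).prod

/-- The depth-`p` QAOA state `|β,γ⟩ = U_B(β_p) U_C(γ_p) ⋯ U_B(β_1) U_C(γ_1) |+⟩`. -/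
def qaoaState (n : ℕ) (G : SimpleGraph (Fin n)) [DecidableRel G.Adj] {p : ℕ}
    (β γ : Fin p → ℝ) : QIdx n → ℂ :=
  (uProd n G β γ 0 p).mulVec (plusState n)

/-- The depth-`p` QAOA cost function `E_p(β,γ) = ⟨β,γ| H_C |β,γ⟩` as a real-valued function on
`ℝ^p × ℝ^p`. -/
def energyE (n : ℕ) (G : SimpleGraph (Fin n)) [DecidableRel G.Adj] (p : ℕ)
    (x : (Fin p → ℝ) × (Fin p → ℝ)) : ℝ :=
  (star (qaoaState n G x.1 x.2) ⬝ᵥ (hamC n G).mulVec (qaoaState n G x.1 x.2)).re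

/-- The point `Γ^{p+1}(i,j)` obtained from `(β⋆,γ⋆) ∈ ℝ^p × ℝ^p` by inserting a `0` at
position `i` in the `β`-part and at position `j` in the `γ`-part. -/
def padded {p : ℕ} (x : (Fin p → ℝ) × (Fin p → ℝ)) (i j : Fin (p + 1)) :
    (Fin (p + 1) → ℝ) × (Fin (p + 1) → ℝ) :=
  (i.insertNth 0 x.1, j.insertNth 0 x.2)

/-- The coordinate direction in `ℝ^p × ℝ^p` corresponding to `β_l` (`Sum.inl l`) or
`γ_l` (`Sum.inr l`). -/
def coordDir {p : ℕ} : Fin p ⊕ Fin p → (Fin p → ℝ) × (Fin p → ℝ) :=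
  Sum.elim (fun l => (Pi.single l 1, 0)) (fun l => (0, Pi.single l 1))

/-- Partial derivative of a real function on `ℝ^p × ℝ^p` in the coordinate direction `a`. -/
def pderiv' {p : ℕ} (f : ((Fin p → ℝ) × (Fin p → ℝ)) → ℝ)
    (a : Fin p ⊕ Fin p) (x : (Fin p → ℝ) × (Fin p → ℝ)) : ℝ :=
  fderiv ℝ f x (coordDir a)

/-- The Hessian matrix of a real function on `ℝ^p × ℝ^p`, with rows and columns indexed by the
coordinates `β_1,…,β_p` (`Sum.inl`) and `γ_1,…,γ_p` (`Sum.inr`). -/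
def hessian {p : ℕ} (f : ((Fin p → ℝ) × (Fin p → ℝ)) → ℝ)
    (x : (Fin p → ℝ) × (Fin p → ℝ)) : Matrix (Fin p ⊕ Fin p) (Fin p ⊕ Fin p) ℝ :=
  Matrix.of fun a b => pderiv' (pderiv' f b) a x

/-- The commutator `[A, B] = AB - BA`. -/
def commMat {n : ℕ} (A B : Matrix (QIdx n) (QIdx n) ℂ) : Matrix (QIdx n) (QIdx n) ℂ :=
  A * B - B * A

end

section Batch1
open NormedSpace
attribute [local instance] Matrix.linftyOpNormedAddCommGroup Matrix.linftyOpNormedRing Matrix.linftyOpNormedAlgebra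

noncomputable section
variable {n : ℕ}

abbrev Mx (n : ℕ) := Matrix (QIdx n) (QIdx n) ℂ

lemma pauliZ_real (a b : Fin 2) : (starRingEnd ℂ) (pauliZ a b) = pauliZ a b := by
  fin_cases a <;> fin_cases b <;> simp [pauliZ]

lemma pauliX_conj (a b : Fin 2) : (starRingEnd ℂ) (pauliX a b) = pauliX b a := by
  fin_cases a <;> fin_cases b <;> simp [pauliX]

lemma sigmaZ_herm (i : Fin n) : (sigmaZ i)ᴴ = sigmaZ i := by
  rw [sigmaZ_eq_diagonal, Matrix.diagonal_conjTranspose]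
  exact congrArg Matrix.diagonal (funext fun s => pauliZ_real _ _)

lemma sigmaX_herm (i : Fin n) : (sigmaX i)ᴴ = sigmaX i := by
  ext s t
  simp only [Matrix.conjTranspose_apply, sigmaX, pauliAt, Matrix.of_apply, star_def, map_prod]
  refine Finset.prod_congr rfl fun j _ => ?_
  by_cases h : j = i
  · subst h
    rw [if_pos rfl, if_pos rfl, pauliX_conj]
  · rw [if_neg h, if_neg h]
    by_cases h2 : s j = t j
    · rw [if_pos h2, if_pos h2.symm, RingHom.map_one]
    · rw [if_neg h2, if_neg (fun hh => h2 hh.symm), RingHom.map_zero]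

lemma hamC_herm (G : SimpleGraph (Fin n)) [DecidableRel G.Adj] : (hamC n G)ᴴ = hamC n G := by
  unfold hamC
  rw [Matrix.conjTranspose_sum]
  refine Finset.sum_congr rfl fun e _ => ?_
  induction e using Sym2.ind with
  | _ i j =>
    simp only [Sym2.lift_mk]
    rw [Matrix.conjTranspose_mul, sigmaZ_herm, sigmaZ_herm, sigmaZ_mul_comm]

lemma hamB_herm : (hamB n)ᴴ = hamB n := by
  unfold hamB
  rw [Matrix.conjTranspose_neg, Matrix.conjTranspose_sum]
  congr 1
  exact Finset.sum_congr rfl fun i _ => sigmaX_herm i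

lemma exp_cc : (NormedSpace.exp : Mx n → Mx n) = NormedSpace.exp := rfl

lemma uB_eq (β : ℝ) : uB n β = exp (β • ((-Complex.I) • hamB n)) := by
  rw [uB, exp_cc]
  congr 1
  rw [← smul_assoc]
  congr 1
  rw [Complex.real_smul]
  ring

lemma uC_eq (G : SimpleGraph (Fin n)) [DecidableRel G.Adj] (γ : ℝ) :
    uC n G γ = exp (γ • ((-Complex.I) • hamC n G)) := by
  rw [uC, exp_cc]
  congr 1
  rw [← smul_assoc]
  congr 1
  rw [Complex.real_smul]
  ring

lemma uB_zero : uB n 0 = 1 := by rw [uB_eq, zero_smul, NormedSpace.exp_zero]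

lemma uC_zero (G : SimpleGraph (Fin n)) [DecidableRel G.Adj] : uC n G 0 = 1 := by
  rw [uC_eq, zero_smul, NormedSpace.exp_zero]

end
end Batch1
section Batch2
open NormedSpace
attribute [local instance] Matrix.linftyOpNormedAddCommGroup Matrix.linftyOpNormedRing Matrix.linftyOpNormedAlgebra

noncomputable section
variable {n : ℕ} (G : SimpleGraph (Fin n)) [DecidableRel G.Adj]

lemma uProd_concat {p : ℕ} (β γ : Fin p → ℝ) (a len : ℕ) :
    uProd n G β γ a (len + 1) = qaoaLayer n G β γ (a + len) * uProd n G β γ a len := by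
  rw [uProd, uProd, List.range'_concat, List.reverse_append]
  simp

lemma uProd_congr {p q : ℕ} (β γ : Fin p → ℝ) (β' γ' : Fin q → ℝ) (a len : ℕ)
    (h : ∀ m, a ≤ m → m < a + len → qaoaLayer n G β γ m = qaoaLayer n G β' γ' m) :
    uProd n G β γ a len = uProd n G β' γ' a len := by
  rw [uProd, uProd]
  congr 1
  apply List.map_congr_left
  intro m hm
  rw [List.mem_reverse, List.mem_range'_1] at hm
  exact h m hm.1 hm.2

lemma qaoaLayer_lt {p : ℕ} (β γ : Fin p → ℝ) (m : ℕ) (h : m < p) :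
    qaoaLayer n G β γ m = uB n (β ⟨m, h⟩) * uC n G (γ ⟨m, h⟩) := dif_pos h

/-- Splitting off the top layer of a depth-(p+1) circuit. -/
lemma qaoaState_succ {p : ℕ} (β γ : Fin (p + 1) → ℝ) :
    qaoaState n G β γ =
      (uB n (β (Fin.last p)) * uC n G (γ (Fin.last p))).mulVec
        (qaoaState n G (Fin.init β) (Fin.init γ)) := by
  have h1 := uProd_concat G β γ 0 p
  rw [zero_add] at h1
  have h2 : uProd n G β γ 0 p = uProd n G (Fin.init β) (Fin.init γ) 0 p := by
    apply uProd_congr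
    intro m _ hm
    rw [zero_add] at hm
    rw [qaoaLayer_lt G β γ m (Nat.lt_succ_of_lt hm),
      qaoaLayer_lt G (Fin.init β) (Fin.init γ) m hm]
    rfl
  have h3 : qaoaLayer n G β γ p = uB n (β (Fin.last p)) * uC n G (γ (Fin.last p)) :=
    qaoaLayer_lt G β γ p p.lt_succ_self
  rw [qaoaState, h1, h2, h3, ← Matrix.mulVec_mulVec, qaoaState]

lemma star_dot_conj (M : Matrix (QIdx n) (QIdx n) ℂ) (v : QIdx n → ℂ) :
    (starRingEnd ℂ) (star v ⬝ᵥ M.mulVec v) = star v ⬝ᵥ Mᴴ.mulVec v := by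
  simp only [dotProduct, Matrix.mulVec, Matrix.conjTranspose_apply, Pi.star_apply,
    map_sum, RingHom.map_mul, Finset.mul_sum]
  rw [Finset.sum_comm]
  refine Finset.sum_congr rfl fun i _ => Finset.sum_congr rfl fun j _ => ?_
  simp only [RCLike.star_def, RingHomCompTriple.comp_apply, RingHom.id_apply,
    Complex.conj_conj, starRingEnd_self_apply]
  ring

lemma quad_to_sandwich (M N C : Matrix (QIdx n) (QIdx n) ℂ) (v : QIdx n → ℂ) :
    star (M.mulVec v) ⬝ᵥ C.mulVec (N.mulVec v) = star v ⬝ᵥ (Mᴴ * C * N).mulVec v := by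
  rw [Matrix.star_mulVec, Matrix.mulVec_mulVec, ← Matrix.dotProduct_mulVec,
    Matrix.mulVec_mulVec, Matrix.mul_assoc]

lemma uC_conj_herm (g : ℝ) (C : Matrix (QIdx n) (QIdx n) ℂ) (hC : Cᴴ = C) :
    (exp (g • ((-Complex.I) • C)))ᴴ * C * exp (g • ((-Complex.I) • C)) = C := by
  set A : Matrix (QIdx n) (QIdx n) ℂ := g • ((-Complex.I) • C) with hA
  have hcomm : Commute C A := ((Commute.refl C).smul_right (-Complex.I)).smul_right g
  have h1 : (exp A)ᴴ = exp Aᴴ := (Matrix.exp_conjTranspose A).symm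
  have h2 : Aᴴ = -A := by
    rw [hA, Matrix.conjTranspose_smul, Matrix.conjTranspose_smul, hC]
    simp
  have h3 : Commute C (exp A) := hcomm.exp_right
  rw [h1, h2, Matrix.mul_assoc, h3.eq, ← Matrix.mul_assoc,
    ← Matrix.exp_add_of_commute _ _ (Commute.neg_left (Commute.refl A)), neg_add_cancel,
    NormedSpace.exp_zero, Matrix.one_mul]

end
end Batch2
section Batch3
open NormedSpace
attribute [local instance] Matrix.linftyOpNormedAddCommGroup Matrix.linftyOpNormedRing Matrix.linftyOpNormedAlgebra

noncomputable section
variable {n : ℕ}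

/-- conjugate transpose as a real-linear CLM -/
def ctCLM (n : ℕ) : Matrix (QIdx n) (QIdx n) ℂ →L[ℝ] Matrix (QIdx n) (QIdx n) ℂ :=
  LinearMap.toContinuousLinearMap
    { toFun := fun M => Mᴴ
      map_add' := fun M N => Matrix.conjTranspose_add M N
      map_smul' := fun r M => by
        show (r • M)ᴴ = r • Mᴴ
        rw [Matrix.conjTranspose_smul, star_trivial] }

/-- M ↦ (star v ⬝ᵥ M.mulVec v).re as a real CLM -/
def expectCLM (n : ℕ) (v : QIdx n → ℂ) : Matrix (QIdx n) (QIdx n) ℂ →L[ℝ] ℝ :=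
  LinearMap.toContinuousLinearMap
    { toFun := fun M => (star v ⬝ᵥ M.mulVec v).re
      map_add' := fun M N => by
        show (star v ⬝ᵥ (M + N) *ᵥ v).re = _
        rw [Matrix.add_mulVec, dotProduct_add, Complex.add_re]
      map_smul' := fun r M => by
        show (star v ⬝ᵥ (r • M) *ᵥ v).re = r • (star v ⬝ᵥ M *ᵥ v).re
        rw [Matrix.smul_mulVec, dotProduct_smul, Complex.smul_re, smul_eq_mul] }

@[simp] lemma ctCLM_apply (M : Matrix (QIdx n) (QIdx n) ℂ) : ctCLM n M = Mᴴ := rfl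

@[simp] lemma expectCLM_apply (v : QIdx n → ℂ) (M : Matrix (QIdx n) (QIdx n) ℂ) :
    expectCLM n v M = (star v ⬝ᵥ M.mulVec v).re := rfl

lemma quad_re_eq (M N C : Matrix (QIdx n) (QIdx n) ℂ) (v : QIdx n → ℂ) :
    (star (M.mulVec v) ⬝ᵥ C.mulVec (N.mulVec v)).re = expectCLM n v (Mᴴ * C * N) := by
  rw [expectCLM_apply, quad_to_sandwich]

lemma hasDerivAt_quadform {F G : ℝ → Matrix (QIdx n) (QIdx n) ℂ}
    {F' G' : Matrix (QIdx n) (QIdx n) ℂ} {t : ℝ}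
    (hF : HasDerivAt F F' t) (hG : HasDerivAt G G' t)
    (C : Matrix (QIdx n) (QIdx n) ℂ) (v : QIdx n → ℂ) :
    HasDerivAt (fun s => (star ((F s).mulVec v) ⬝ᵥ C.mulVec ((G s).mulVec v)).re)
      ((star (F'.mulVec v) ⬝ᵥ C.mulVec ((G t).mulVec v)).re +
        (star ((F t).mulVec v) ⬝ᵥ C.mulVec (G'.mulVec v)).re) t := by
  have hFct : HasDerivAt (fun s => (F s)ᴴ) F'ᴴ t := by
    exact (ctCLM n).hasFDerivAt.comp_hasDerivAt t hF
  have hmul : HasDerivAt (fun s => (F s)ᴴ * C * G s)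
      ((F'ᴴ * C) * G t + ((F t)ᴴ * C) * G') t := (hFct.mul_const C).mul hG
  have h3 := (expectCLM n v).hasFDerivAt.comp_hasDerivAt t hmul
  simp only [map_add, Function.comp_def] at h3
  have h2 : (fun s => (star ((F s).mulVec v) ⬝ᵥ C.mulVec ((G s).mulVec v)).re) =
      fun s => expectCLM n v ((F s)ᴴ * C * G s) := funext fun s => quad_re_eq _ _ _ _
  rw [h2, quad_re_eq, quad_re_eq]
  rw [← map_add]
  exact h3

lemma fderiv_line {P : Type*} [NormedAddCommGroup P] [NormedSpace ℝ P]
    {f : P → ℝ} {x v : P} (hf : DifferentiableAt ℝ f x) {d : ℝ}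
    (h : HasDerivAt (fun t : ℝ => f (x + t • v)) d 0) : fderiv ℝ f x v = d := by
  have hl : HasDerivAt (fun t : ℝ => x + t • v) v 0 := by
    simpa using ((hasDerivAt_id (0 : ℝ)).smul_const v).const_add x
  have h0 : x + (0 : ℝ) • v = x := by simp
  have hc : HasDerivAt (fun t : ℝ => f (x + t • v)) (fderiv ℝ f x v) 0 := by
    have := (h0 ▸ hf).hasFDerivAt.comp_hasDerivAt 0 hl
    simp only [h0] at this
    exact this
  exact hc.unique h

end
end Batch3
section Batch4
open NormedSpace
attribute [local instance] Matrix.linftyOpNormedAddCommGroup Matrix.linftyOpNormedRing Matrix.linftyOpNormedAlgebra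

noncomputable section
variable {n : ℕ} (G : SimpleGraph (Fin n)) [DecidableRel G.Adj]

lemma contDiff_exp_mat : ContDiff ℝ 2 (exp : Matrix (QIdx n) (QIdx n) ℂ → _) :=
  contDiff_iff_contDiffAt.2 fun x => (exp_analytic (𝕂 := ℝ) x).contDiffAt

lemma contDiff_uB_comp {P : Type*} [NormedAddCommGroup P] [NormedSpace ℝ P]
    {f : P → ℝ} (hf : ContDiff ℝ 2 f) : ContDiff ℝ 2 (fun x => uB n (f x)) := by
  have : (fun x => uB n (f x)) = fun x => exp ((f x) • ((-Complex.I) • hamB n)) :=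
    funext fun x => uB_eq _
  rw [this]
  exact contDiff_exp_mat.comp (hf.smul contDiff_const)

lemma contDiff_uC_comp {P : Type*} [NormedAddCommGroup P] [NormedSpace ℝ P]
    {f : P → ℝ} (hf : ContDiff ℝ 2 f) : ContDiff ℝ 2 (fun x => uC n G (f x)) := by
  have : (fun x => uC n G (f x)) = fun x => exp ((f x) • ((-Complex.I) • hamC n G)) :=
    funext fun x => uC_eq _ _
  rw [this]
  exact contDiff_exp_mat.comp (hf.smul contDiff_const)

lemma contDiff_coord {p : ℕ} (m : Fin p) :
    ContDiff ℝ 2 (fun x : (Fin p → ℝ) × (Fin p → ℝ) => x.1 m) :=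
  by simpa [Function.comp_def] using
    ((ContinuousLinearMap.proj (R := ℝ) (φ := fun _ : Fin p => ℝ) m).contDiff.comp
      (contDiff_fst (E := Fin p → ℝ) (F := Fin p → ℝ) (𝕜 := ℝ)) : ContDiff ℝ 2 _)

lemma contDiff_coord' {p : ℕ} (m : Fin p) :
    ContDiff ℝ 2 (fun x : (Fin p → ℝ) × (Fin p → ℝ) => x.2 m) :=
  by simpa [Function.comp_def] using
    ((ContinuousLinearMap.proj (R := ℝ) (φ := fun _ : Fin p => ℝ) m).contDiff.comp
      (contDiff_snd (E := Fin p → ℝ) (F := Fin p → ℝ) (𝕜 := ℝ)) : ContDiff ℝ 2 _)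

lemma contDiff_uProd {p : ℕ} (a len : ℕ) :
    ContDiff ℝ 2 (fun x : (Fin p → ℝ) × (Fin p → ℝ) => uProd n G x.1 x.2 a len) := by
  induction len with
  | zero =>
    have : (fun x : (Fin p → ℝ) × (Fin p → ℝ) => uProd n G x.1 x.2 a 0) = fun _ => 1 := by
      funext x; simp [uProd]
    rw [this]; exact contDiff_const
  | succ len ih =>
    have : (fun x : (Fin p → ℝ) × (Fin p → ℝ) => uProd n G x.1 x.2 a (len + 1)) =
        fun x => qaoaLayer n G x.1 x.2 (a + len) * uProd n G x.1 x.2 a len :=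
      funext fun x => uProd_concat G x.1 x.2 a len
    rw [this]
    refine ContDiff.mul ?_ ih
    by_cases h : a + len < p
    · have : (fun x : (Fin p → ℝ) × (Fin p → ℝ) => qaoaLayer n G x.1 x.2 (a + len)) =
          fun x => uB n (x.1 ⟨a + len, h⟩) * uC n G (x.2 ⟨a + len, h⟩) :=
        funext fun x => qaoaLayer_lt G x.1 x.2 _ h
      rw [this]
      exact (contDiff_uB_comp (contDiff_coord _)).mul (contDiff_uC_comp G (contDiff_coord' _))
    · have : (fun x : (Fin p → ℝ) × (Fin p → ℝ) => qaoaLayer n G x.1 x.2 (a + len)) =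
          fun _ => 1 := funext fun x => dif_neg h
      rw [this]; exact contDiff_const

lemma energyE_eq {p : ℕ} (x : (Fin p → ℝ) × (Fin p → ℝ)) :
    energyE n G p x = expectCLM n (plusState n)
      ((uProd n G x.1 x.2 0 p)ᴴ * hamC n G * uProd n G x.1 x.2 0 p) := by
  rw [energyE, qaoaState, quad_re_eq]

lemma contDiff_energyE (p : ℕ) : ContDiff ℝ 2 (energyE n G p) := by
  have : energyE n G p = fun x => expectCLM n (plusState n)
      ((uProd n G x.1 x.2 0 p)ᴴ * hamC n G * uProd n G x.1 x.2 0 p) :=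
    funext fun x => energyE_eq G x
  rw [this]
  refine (expectCLM n (plusState n)).contDiff.comp ?_
  exact (((ctCLM n).contDiff.comp (contDiff_uProd G 0 p)).mul contDiff_const).mul
    (contDiff_uProd G 0 p)

end
end Batch4
section Batch5
open NormedSpace
attribute [local instance] Matrix.linftyOpNormedAddCommGroup Matrix.linftyOpNormedRing Matrix.linftyOpNormedAlgebra

noncomputable section
variable {n : ℕ} (G : SimpleGraph (Fin n)) [DecidableRel G.Adj]

lemma qaoaState_pad {p : ℕ} (β γ : Fin p → ℝ) :
    qaoaState n G (Fin.snoc β 0) (Fin.snoc γ 0) = qaoaState n G β γ := by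
  rw [qaoaState_succ]
  simp only [Fin.snoc_last, Fin.init_snoc, uB_zero, uC_zero, Matrix.one_mul,
    Matrix.one_mulVec]

/-- the linear padding map -/
def padCLM (p : ℕ) : (Fin p → ℝ) × (Fin p → ℝ) →L[ℝ] (Fin (p + 1) → ℝ) × (Fin (p + 1) → ℝ) :=
  LinearMap.toContinuousLinearMap
    { toFun := fun x => (Fin.snoc x.1 0, Fin.snoc x.2 0)
      map_add' := fun x y => by
        ext j <;> simp only [Prod.fst_add, Prod.snd_add, Pi.add_apply] <;>
          induction j using Fin.lastCases <;>
            simp [Fin.snoc_castSucc, Fin.snoc_last]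
      map_smul' := fun r x => by
        ext j <;> simp only [RingHom.id_apply, Prod.smul_fst, Prod.smul_snd, Pi.smul_apply] <;>
          induction j using Fin.lastCases <;>
            simp [Fin.snoc_castSucc, Fin.snoc_last] }

@[simp] lemma padCLM_apply {p : ℕ} (x : (Fin p → ℝ) × (Fin p → ℝ)) :
    padCLM p x = (Fin.snoc x.1 0, Fin.snoc x.2 0) := rfl

lemma padded_eq_padCLM {p : ℕ} (x : (Fin p → ℝ) × (Fin p → ℝ)) :
    padded x (Fin.last p) (Fin.last p) = padCLM p x := by
  simp [padded, Fin.insertNth_last']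

lemma energyE_pad {p : ℕ} (x : (Fin p → ℝ) × (Fin p → ℝ)) :
    energyE n G p x = energyE n G (p + 1) (padCLM p x) := by
  rw [energyE, energyE, padCLM_apply]
  rw [qaoaState_pad]

/-- the coordinate embedding -/
def embC {p : ℕ} : Fin p ⊕ Fin p → Fin (p + 1) ⊕ Fin (p + 1) :=
  Sum.map Fin.castSucc Fin.castSucc

lemma snoc_single {p : ℕ} (l : Fin p) :
    (Fin.snoc (Pi.single l (1 : ℝ)) 0 : Fin (p + 1) → ℝ) = Pi.single l.castSucc 1 := by
  funext j
  induction j using Fin.lastCases with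
  | last =>
    rw [Fin.snoc_last, Pi.single_apply, if_neg (Fin.castSucc_lt_last l).ne']
  | cast j =>
    rw [Fin.snoc_castSucc, Pi.single_apply, Pi.single_apply]
    by_cases h : l = j
    · subst h; simp
    · rw [if_neg (fun hh => h (Fin.castSucc_injective _ hh).symm), if_neg (fun hh => h hh.symm)]

lemma snoc_zero {p : ℕ} : (Fin.snoc (0 : Fin p → ℝ) 0 : Fin (p + 1) → ℝ) = 0 := by
  funext j
  induction j using Fin.lastCases <;> simp

lemma padCLM_coordDir {p : ℕ} (a : Fin p ⊕ Fin p) :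
    padCLM p (coordDir a) = coordDir (embC a) := by
  cases a with
  | inl l => simp [coordDir, embC, snoc_single, snoc_zero]
  | inr l => simp [coordDir, embC, snoc_single, snoc_zero]

lemma differentiable_pderiv' {p : ℕ} {f : ((Fin p → ℝ) × (Fin p → ℝ)) → ℝ}
    (hf : ContDiff ℝ 2 f) (c : Fin p ⊕ Fin p) : Differentiable ℝ (pderiv' f c) := by
  have h1 : ContDiff ℝ 1 (fderiv ℝ f) := hf.fderiv_right (le_refl _)
  have : pderiv' f c = fun x =>
      (ContinuousLinearMap.apply ℝ ℝ (coordDir c)) (fderiv ℝ f x) := rfl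
  rw [this]
  exact fun x => ((ContinuousLinearMap.apply ℝ ℝ (coordDir c)).differentiable.comp
    (h1.differentiable one_ne_zero)).differentiableAt

lemma pderiv'_comp_clm {p q : ℕ} {f : ((Fin q → ℝ) × (Fin q → ℝ)) → ℝ}
    (hf : Differentiable ℝ f)
    (L : ((Fin p → ℝ) × (Fin p → ℝ)) →L[ℝ] ((Fin q → ℝ) × (Fin q → ℝ)))
    (b : Fin p ⊕ Fin p) (x : (Fin p → ℝ) × (Fin p → ℝ)) :
    pderiv' (fun y => f (L y)) b x = fderiv ℝ f (L x) (L (coordDir b)) := by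
  rw [pderiv']
  have : (fun y => f (L y)) = f ∘ L := rfl
  rw [this, fderiv_comp x (hf.differentiableAt) L.differentiableAt, L.fderiv]
  rfl

lemma pderiv'_pderiv'_pad {p : ℕ} (x : (Fin p → ℝ) × (Fin p → ℝ)) (a b : Fin p ⊕ Fin p) :
    pderiv' (pderiv' (energyE n G p) b) a x =
      pderiv' (pderiv' (energyE n G (p + 1)) (embC b)) (embC a) (padCLM p x) := by
  have hE := contDiff_energyE G (p + 1)
  have hEd : Differentiable ℝ (energyE n G (p + 1)) := hE.differentiable (by norm_num)
  have h1 : pderiv' (energyE n G p) b =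
      fun y => pderiv' (energyE n G (p + 1)) (embC b) (padCLM p y) := by
    funext y
    have : energyE n G p = fun z => energyE n G (p + 1) (padCLM p z) :=
      funext fun z => energyE_pad G z
    rw [this, pderiv'_comp_clm hEd, padCLM_coordDir]
    rfl
  rw [h1, pderiv'_comp_clm (differentiable_pderiv' hE (embC b)) (padCLM p), padCLM_coordDir]
  rfl

end
end Batch5
section Batch6
open NormedSpace
attribute [local instance] Matrix.linftyOpNormedAddCommGroup Matrix.linftyOpNormedRing Matrix.linftyOpNormedAlgebra

noncomputable section
variable {n : ℕ} (G : SimpleGraph (Fin n)) [DecidableRel G.Adj]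

/-- On the hyperplane β_{p+1} = 0, the energy is constant in the γ_{p+1} direction. -/
lemma energyE_const_gamma {p : ℕ} (x : (Fin (p + 1) → ℝ) × (Fin (p + 1) → ℝ))
    (hx : x.1 (Fin.last p) = 0) :
    energyE n G (p + 1) x =
      (star (qaoaState n G (Fin.init x.1) (Fin.init x.2)) ⬝ᵥ
        (hamC n G).mulVec (qaoaState n G (Fin.init x.1) (Fin.init x.2))).re := by
  rw [energyE, qaoaState_succ, hx, uB_zero, Matrix.one_mul, quad_re_eq, uC_eq,
    uC_conj_herm _ _ (hamC_herm G), expectCLM_apply]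

lemma pderiv_gamma_zero {p : ℕ} (x : (Fin (p + 1) → ℝ) × (Fin (p + 1) → ℝ))
    (hx : x.1 (Fin.last p) = 0) :
    pderiv' (energyE n G (p + 1)) (Sum.inr (Fin.last p)) x = 0 := by
  have hE := contDiff_energyE G (p + 1)
  set v := coordDir (p := p + 1) (Sum.inr (Fin.last p)) with hv
  have hline : ∀ t : ℝ, energyE n G (p + 1) (x + t • v) = energyE n G (p + 1) x := by
    intro t
    have h1 : (x + t • v).1 = x.1 := by
      funext j; simp [hv, coordDir]
    have h2 : Fin.init (x + t • v).2 = Fin.init x.2 := by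
      funext l
      simp only [Fin.init, Prod.snd_add, Prod.smul_snd, Pi.add_apply, Pi.smul_apply, hv, coordDir,
        Sum.elim_inr, Pi.single_apply, if_neg (Fin.castSucc_lt_last l).ne, smul_zero, add_zero,
        smul_eq_mul, mul_zero]
    rw [energyE_const_gamma G _ (by rw [h1]; exact hx), energyE_const_gamma G x hx, h1, h2]
  rw [pderiv']
  refine fderiv_line (hE.differentiable (by norm_num) x) ?_
  have : (fun t : ℝ => energyE n G (p + 1) (x + t • v)) =
      fun _ => energyE n G (p + 1) x := funext hline
  rw [this]
  exact hasDerivAt_const 0 _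

/-- derivative of the (vanishing) γ-partial in a direction staying in the hyperplane -/
lemma pderiv_pderiv_gamma_zero {p : ℕ} (x : (Fin (p + 1) → ℝ) × (Fin (p + 1) → ℝ))
    (hx : x.1 (Fin.last p) = 0) (a : Fin (p + 1) ⊕ Fin (p + 1))
    (ha : (coordDir a).1 (Fin.last p) = 0) :
    pderiv' (pderiv' (energyE n G (p + 1)) (Sum.inr (Fin.last p))) a x = 0 := by
  have hE := contDiff_energyE G (p + 1)
  rw [pderiv']
  refine fderiv_line (differentiable_pderiv' hE _ x) ?_
  have : (fun t : ℝ => pderiv' (energyE n G (p + 1)) (Sum.inr (Fin.last p))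
      (x + t • coordDir a)) = fun _ => 0 := by
    funext t
    refine pderiv_gamma_zero G _ ?_
    simp [hx, ha]
  rw [this]
  exact hasDerivAt_const 0 _

lemma pderiv'_eq_snd_fderiv {p : ℕ} {f : ((Fin p → ℝ) × (Fin p → ℝ)) → ℝ}
    (hf : ContDiff ℝ 2 f) (a b : Fin p ⊕ Fin p) (x : (Fin p → ℝ) × (Fin p → ℝ)) :
    pderiv' (pderiv' f b) a x = fderiv ℝ (fderiv ℝ f) x (coordDir a) (coordDir b) := by
  have h1 : ContDiff ℝ 1 (fderiv ℝ f) := hf.fderiv_right (le_refl _)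
  rw [pderiv']
  have h2 : pderiv' f b =
      ⇑(ContinuousLinearMap.apply ℝ ℝ (coordDir b)) ∘ fderiv ℝ f := rfl
  rw [h2, fderiv_comp x ((ContinuousLinearMap.apply ℝ ℝ (coordDir b)).differentiableAt)
    ((h1.differentiable one_ne_zero).differentiableAt)]
  simp [ContinuousLinearMap.apply]

lemma pderiv'_symm {p : ℕ} {f : ((Fin p → ℝ) × (Fin p → ℝ)) → ℝ}
    (hf : ContDiff ℝ 2 f) (a b : Fin p ⊕ Fin p) (x : (Fin p → ℝ) × (Fin p → ℝ)) :
    pderiv' (pderiv' f b) a x = pderiv' (pderiv' f a) b x := by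
  rw [pderiv'_eq_snd_fderiv hf, pderiv'_eq_snd_fderiv hf]
  exact (hf.contDiffAt.isSymmSndFDerivAt (by simp [minSmoothness_of_isRCLikeNormedField])).eq _ _

end
end Batch6
section Batch7
open NormedSpace
attribute [local instance] Matrix.linftyOpNormedAddCommGroup Matrix.linftyOpNormedRing Matrix.linftyOpNormedAlgebra

noncomputable section
variable {n : ℕ} (G : SimpleGraph (Fin n)) [DecidableRel G.Adj]

lemma hasDerivAt_uB : HasDerivAt (fun t : ℝ => uB n t) ((-Complex.I) • hamB n) 0 := by
  have h : (fun t : ℝ => uB n t) = fun t => NormedSpace.exp (t • ((-Complex.I) • hamB n)) :=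
    funext fun t => uB_eq t
  rw [h]
  have := hasDerivAt_exp_smul_const ((-Complex.I) • hamB n) (0 : ℝ)
  simp only [zero_smul, NormedSpace.exp_zero, one_mul] at this
  exact this

lemma hasDerivAt_uC : HasDerivAt (fun s : ℝ => uC n G s) ((-Complex.I) • hamC n G) 0 := by
  have h : (fun s : ℝ => uC n G s) = fun s => NormedSpace.exp (s • ((-Complex.I) • hamC n G)) :=
    funext fun s => uC_eq G s
  rw [h]
  have := hasDerivAt_exp_smul_const ((-Complex.I) • hamC n G) (0 : ℝ)
  simp only [zero_smul, NormedSpace.exp_zero, one_mul] at this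
  exact this

lemma eval_E_line {p : ℕ} (β γ : Fin p → ℝ) (t s : ℝ) :
    energyE n G (p + 1) (padCLM p (β, γ) + t • coordDir (Sum.inl (Fin.last p)) +
        s • coordDir (Sum.inr (Fin.last p))) =
      (star ((uB n t * uC n G s).mulVec (qaoaState n G β γ)) ⬝ᵥ
        (hamC n G).mulVec ((uB n t * uC n G s).mulVec (qaoaState n G β γ))).re := by
  set z := padCLM p (β, γ) + t • coordDir (Sum.inl (Fin.last p)) +
    s • coordDir (Sum.inr (Fin.last p)) with hz
  have h1 : z.1 (Fin.last p) = t := by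
    simp [hz, coordDir, Fin.snoc_last]
  have h2 : z.2 (Fin.last p) = s := by
    simp [hz, coordDir, Fin.snoc_last]
  have h3 : Fin.init z.1 = β := by
    funext l
    simp [hz, Fin.init, coordDir, Fin.snoc_castSucc,
      Pi.single_apply, if_neg (Fin.castSucc_lt_last l).ne]
  have h4 : Fin.init z.2 = γ := by
    funext l
    simp [hz, Fin.init, coordDir, Fin.snoc_castSucc,
      Pi.single_apply, if_neg (Fin.castSucc_lt_last l).ne]
  rw [energyE, qaoaState_succ, h1, h2, h3, h4]

/-- the γ-partial along the β-line through Γ -/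
lemma gamma_partial_on_line {p : ℕ} (β γ : Fin p → ℝ) (t : ℝ) :
    pderiv' (energyE n G (p + 1)) (Sum.inr (Fin.last p))
        (padCLM p (β, γ) + t • coordDir (Sum.inl (Fin.last p))) =
      (star ((uB n t * ((-Complex.I) • hamC n G)).mulVec (qaoaState n G β γ)) ⬝ᵥ
        (hamC n G).mulVec ((uB n t).mulVec (qaoaState n G β γ))).re +
      (star ((uB n t).mulVec (qaoaState n G β γ)) ⬝ᵥ
        (hamC n G).mulVec (((uB n t * ((-Complex.I) • hamC n G))).mulVec
          (qaoaState n G β γ))).re := by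
  have hE := contDiff_energyE G (p + 1)
  rw [pderiv']
  refine fderiv_line (hE.differentiable (by norm_num) _) ?_
  have heq : (fun s : ℝ => energyE n G (p + 1)
      ((padCLM p (β, γ) + t • coordDir (Sum.inl (Fin.last p))) +
        s • coordDir (Sum.inr (Fin.last p)))) =
      fun s => (star ((uB n t * uC n G s).mulVec (qaoaState n G β γ)) ⬝ᵥ
        (hamC n G).mulVec ((uB n t * uC n G s).mulVec (qaoaState n G β γ))).re :=
    funext fun s => eval_E_line G β γ t s
  rw [heq]
  have hF : HasDerivAt (fun s : ℝ => uB n t * uC n G s)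
      (uB n t * ((-Complex.I) • hamC n G)) 0 := (hasDerivAt_uC G).const_mul (uB n t)
  have h2 := hasDerivAt_quadform hF hF (hamC n G) (qaoaState n G β γ)
  rw [uC_zero, Matrix.mul_one] at h2
  exact h2

set_option maxHeartbeats 1000000 in
lemma b_value {p : ℕ} (β γ : Fin p → ℝ) :
    ((pderiv' (pderiv' (energyE n G (p + 1)) (Sum.inr (Fin.last p))) (Sum.inl (Fin.last p))
        (padCLM p (β, γ)) : ℝ) : ℂ) =
      star (qaoaState n G β γ) ⬝ᵥ
        (commMat (commMat (hamB n) (hamC n G)) (hamC n G)).mulVec (qaoaState n G β γ) := by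
  have hE := contDiff_energyE G (p + 1)
  set ψ := qaoaState n G β γ with hψ
  set B := hamB n with hB
  set C := hamC n G with hC
  set AB : Matrix (QIdx n) (QIdx n) ℂ := (-Complex.I) • B with hAB
  set AC : Matrix (QIdx n) (QIdx n) ℂ := (-Complex.I) • C with hAC
  -- step 1 : the real second derivative
  have hderiv : pderiv' (pderiv' (energyE n G (p + 1)) (Sum.inr (Fin.last p)))
      (Sum.inl (Fin.last p)) (padCLM p (β, γ)) =
      ((star ((AB * AC).mulVec ψ) ⬝ᵥ C.mulVec ψ).re +
        (star (AC.mulVec ψ) ⬝ᵥ C.mulVec (AB.mulVec ψ)).re) +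
      ((star (AB.mulVec ψ) ⬝ᵥ C.mulVec (AC.mulVec ψ)).re +
        (star ψ ⬝ᵥ C.mulVec ((AB * AC).mulVec ψ)).re) := by
    rw [pderiv']
    refine fderiv_line (differentiable_pderiv' hE _ _) ?_
    have heq : (fun t : ℝ => pderiv' (energyE n G (p + 1)) (Sum.inr (Fin.last p))
        (padCLM p (β, γ) + t • coordDir (Sum.inl (Fin.last p)))) =
        fun t =>
          (star ((uB n t * AC).mulVec ψ) ⬝ᵥ C.mulVec ((uB n t).mulVec ψ)).re +
          (star ((uB n t).mulVec ψ) ⬝ᵥ C.mulVec (((uB n t * AC)).mulVec ψ)).re :=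
      funext fun t => gamma_partial_on_line G β γ t
    rw [heq]
    have hF1 : HasDerivAt (fun t : ℝ => uB n t * AC) (AB * AC) 0 :=
      hasDerivAt_uB.mul_const AC
    have term1 := hasDerivAt_quadform hF1 hasDerivAt_uB C ψ
    have term2 := hasDerivAt_quadform hasDerivAt_uB hF1 C ψ
    have h3 := term1.add term2
    rw [uB_zero, Matrix.one_mul, Matrix.one_mulVec] at h3
    exact h3
  rw [hderiv]
  -- step 2 : assemble into a single sandwich
  have hsum : ((star ((AB * AC).mulVec ψ) ⬝ᵥ C.mulVec ψ).re +
        (star (AC.mulVec ψ) ⬝ᵥ C.mulVec (AB.mulVec ψ)).re) +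
      ((star (AB.mulVec ψ) ⬝ᵥ C.mulVec (AC.mulVec ψ)).re +
        (star ψ ⬝ᵥ C.mulVec ((AB * AC).mulVec ψ)).re) =
      (star ψ ⬝ᵥ (((AB * AC)ᴴ * C * 1) + (ACᴴ * C * AB) + (ABᴴ * C * AC) +
        (1ᴴ * C * (AB * AC))).mulVec ψ).re := by
    have e1 : star ((AB * AC).mulVec ψ) ⬝ᵥ C.mulVec ((1 : Matrix (QIdx n) (QIdx n) ℂ).mulVec ψ) =
        star ψ ⬝ᵥ ((AB * AC)ᴴ * C * 1).mulVec ψ := quad_to_sandwich _ _ _ _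
    have e2 : star (AC.mulVec ψ) ⬝ᵥ C.mulVec (AB.mulVec ψ) =
        star ψ ⬝ᵥ (ACᴴ * C * AB).mulVec ψ := quad_to_sandwich _ _ _ _
    have e3 : star (AB.mulVec ψ) ⬝ᵥ C.mulVec (AC.mulVec ψ) =
        star ψ ⬝ᵥ (ABᴴ * C * AC).mulVec ψ := quad_to_sandwich _ _ _ _
    have e4 : star ((1 : Matrix (QIdx n) (QIdx n) ℂ).mulVec ψ) ⬝ᵥ
          C.mulVec ((AB * AC).mulVec ψ) =
        star ψ ⬝ᵥ (1ᴴ * C * (AB * AC)).mulVec ψ := quad_to_sandwich _ _ _ _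
    rw [Matrix.one_mulVec] at e1 e4
    rw [e1, e2, e3, e4]
    simp only [Matrix.add_mulVec, dotProduct_add, Complex.add_re]
    ring
  rw [hsum]
  -- step 3 : the matrix identity
  have hmat : ((AB * AC)ᴴ * C * 1) + (ACᴴ * C * AB) + (ABᴴ * C * AC) +
      (1ᴴ * C * (AB * AC)) = commMat (commMat B C) C := by
    have hABh : ABᴴ = Complex.I • B := by
      rw [hAB, Matrix.conjTranspose_smul, hB, hamB_herm]
      simp
    have hACh : ACᴴ = Complex.I • C := by
      rw [hAC, Matrix.conjTranspose_smul, hC, hamC_herm]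
      simp
    rw [Matrix.conjTranspose_mul, hABh, hACh, hAB, hAC, Matrix.conjTranspose_one, commMat, commMat]
    simp only [Matrix.smul_mul, Matrix.mul_smul, smul_smul, Complex.I_mul_I,
      neg_mul, mul_neg, neg_neg, Complex.I_mul_I, one_smul, neg_smul, Matrix.mul_one,
      Matrix.one_mul]
    noncomm_ring
  rw [hmat]
  -- step 4 : realness
  set w := star ψ ⬝ᵥ (commMat (commMat B C) C).mulVec ψ with hw
  have hherm : (commMat (commMat B C) C)ᴴ = commMat (commMat B C) C := by
    simp only [commMat, Matrix.conjTranspose_sub, Matrix.conjTranspose_mul, hB, hC,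
      hamB_herm, hamC_herm]
    noncomm_ring
  have hreal : (starRingEnd ℂ) w = w := by
    rw [hw, star_dot_conj, hherm]
  exact Complex.conj_eq_iff_re.mp hreal

end
end Batch7
section Batch8
open NormedSpace
attribute [local instance] Matrix.linftyOpNormedAddCommGroup Matrix.linftyOpNormedRing Matrix.linftyOpNormedAlgebra

noncomputable section
variable {n : ℕ} (G : SimpleGraph (Fin n)) [DecidableRel G.Adj]

def blockEquiv (p : ℕ) : ((Fin p ⊕ Fin p) ⊕ Fin 2) ≃ (Fin (p + 1) ⊕ Fin (p + 1)) where
  toFun := Sum.elim embC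
    (fun k => if k = 0 then Sum.inl (Fin.last p) else Sum.inr (Fin.last p))
  invFun := Sum.elim
    (fun i => Fin.lastCases (Sum.inr 0) (fun l => Sum.inl (Sum.inl l)) i)
    (fun i => Fin.lastCases (Sum.inr 1) (fun l => Sum.inl (Sum.inr l)) i)
  left_inv := by
    rintro ((l | l) | k)
    · simp [embC]
    · simp [embC]
    · fin_cases k <;> simp
  right_inv := by
    rintro (i | i) <;> induction i using Fin.lastCases <;> simp [embC]

lemma det_hessian_pad {p : ℕ} (β γ : Fin p → ℝ)
    (hbne : pderiv' (pderiv' (energyE n G (p + 1)) (Sum.inr (Fin.last p)))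
      (Sum.inl (Fin.last p)) (padCLM p (β, γ)) ≠ 0) :
    (hessian (energyE n G (p + 1)) (padCLM p (β, γ))).det =
      -(pderiv' (pderiv' (energyE n G (p + 1)) (Sum.inr (Fin.last p)))
          (Sum.inl (Fin.last p)) (padCLM p (β, γ))) ^ 2 *
        (hessian (energyE n G p) (β, γ)).det := by
  have hE := contDiff_energyE G (p + 1)
  set f := energyE n G (p + 1) with hf
  set Γ : (Fin (p + 1) → ℝ) × (Fin (p + 1) → ℝ) := padCLM p (β, γ) with hΓ
  set M : Matrix (Fin (p + 1) ⊕ Fin (p + 1)) (Fin (p + 1) ⊕ Fin (p + 1)) ℝ := hessian f Γ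
    with hM
  set bv : ℝ := pderiv' (pderiv' f (Sum.inr (Fin.last p))) (Sum.inl (Fin.last p)) Γ with hbv
  have hΓ1 : Γ.1 (Fin.last p) = 0 := by
    simp [hΓ, Fin.snoc_last]
  -- column and row vanishing
  have hcol : ∀ a, (coordDir a).1 (Fin.last p) = 0 → M a (Sum.inr (Fin.last p)) = 0 :=
    fun a ha => pderiv_pderiv_gamma_zero G Γ hΓ1 a ha
  have hdir1 : ∀ l : Fin p, (coordDir (Sum.inl l.castSucc)).1 (Fin.last p) = 0 := by
    intro l
    simp [coordDir, Pi.single_apply, (Fin.castSucc_lt_last l).ne']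
  have hdir2 : ∀ l : Fin (p + 1), (coordDir (Sum.inr l)).1 (Fin.last p) = 0 := by
    intro l; simp [coordDir]
  have hsymm : ∀ a b, M a b = M b a := by
    intro a b
    show pderiv' (pderiv' f b) a Γ = pderiv' (pderiv' f a) b Γ
    exact pderiv'_symm hE a b Γ
  -- blocks
  set eN : Fin 2 → Fin (p + 1) ⊕ Fin (p + 1) :=
    fun k => if k = 0 then Sum.inl (Fin.last p) else Sum.inr (Fin.last p) with heN
  set Ab : Matrix (Fin p ⊕ Fin p) (Fin p ⊕ Fin p) ℝ :=
    Matrix.of (fun a b => M (embC a) (embC b)) with hAb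
  set Bb : Matrix (Fin p ⊕ Fin p) (Fin 2) ℝ := Matrix.of (fun a k => M (embC a) (eN k)) with hBb
  set Cb : Matrix (Fin 2) (Fin p ⊕ Fin p) ℝ := Matrix.of (fun k b => M (eN k) (embC b)) with hCb
  set Db : Matrix (Fin 2) (Fin 2) ℝ := Matrix.of (fun k k' => M (eN k) (eN k')) with hDb
  have hsub : M.submatrix (blockEquiv p) (blockEquiv p) = Matrix.fromBlocks Ab Bb Cb Db := by
    ext i j
    rcases i with (a | k) <;> rcases j with (b | k') <;> rfl
  have hMemb : ∀ c, embC c ≠ Sum.inl (Fin.last p) → M (embC c) (Sum.inr (Fin.last p)) = 0 := by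
    intro c _
    rcases c with l | l
    · exact hcol _ (hdir1 l)
    · exact hcol _ (hdir2 _)
  have hembne : ∀ c : Fin p ⊕ Fin p, embC c ≠ Sum.inl (Fin.last p) := by
    rintro (l | l) h
    · exact (Fin.castSucc_lt_last l).ne (Sum.inl.inj h)
    · simp [embC] at h
  -- D entries
  have hD01 : Db 0 1 = bv := rfl
  have hD10 : Db 1 0 = bv := by
    show M (Sum.inr (Fin.last p)) (Sum.inl (Fin.last p)) = bv
    rw [hsymm]; rfl
  have hD11 : Db 1 1 = 0 := by
    show M (Sum.inr (Fin.last p)) (Sum.inr (Fin.last p)) = 0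
    rw [hsymm]
    exact hcol _ (hdir2 _)
  have hdetD : Db.det = -bv ^ 2 := by
    rw [Matrix.det_fin_two, hD01, hD10, hD11]
    ring
  have hDunit : IsUnit Db.det := by
    rw [hdetD]
    exact isUnit_iff_ne_zero.mpr (by simpa using pow_ne_zero 2 hbne)
  have : Invertible Db := Db.invertibleOfIsUnitDet hDunit
  -- B ⅟D C = 0
  have hBDC : Bb * ⅟Db * Cb = 0 := by
    have hinv : ⅟Db = Db⁻¹ := invOf_eq_nonsing_inv Db
    have hD00inv : Db⁻¹ 0 0 = 0 := by
      rw [Matrix.inv_def, Matrix.adjugate_fin_two]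
      simp [hD11]
    have hB1 : ∀ a, Bb a 1 = 0 := by
      intro a
      show M (embC a) (Sum.inr (Fin.last p)) = 0
      exact hMemb a (hembne a)
    have hC1 : ∀ b, Cb 1 b = 0 := by
      intro b
      show M (Sum.inr (Fin.last p)) (embC b) = 0
      rw [hsymm]
      exact hMemb b (hembne b)
    ext a b
    rw [Matrix.mul_apply, Matrix.zero_apply]
    rw [Fin.sum_univ_two]
    rw [Matrix.mul_apply, Fin.sum_univ_two, Matrix.mul_apply, Fin.sum_univ_two]
    rw [hinv, hB1, hC1, hD00inv]
    ring
  -- conclude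
  have hMdet : M.det = Db.det * (Ab - Bb * ⅟Db * Cb).det := by
    rw [← Matrix.det_submatrix_equiv_self (blockEquiv p) M, hsub, Matrix.det_fromBlocks₂₂]
  have hAblock : hessian (energyE n G p) (β, γ) = Ab := by
    ext a b
    show pderiv' (pderiv' (energyE n G p) b) a (β, γ) = M (embC a) (embC b)
    rw [pderiv'_pderiv'_pad G (β, γ) a b]
    rfl
  rw [hMdet, hBDC, sub_zero, hdetD, hAblock]

end
end Batch8
/-- Hessian determinant at the last-layer padded point (case i). -/
theorem stmt8 (n : ℕ) (hn : 1 ≤ n) (G : SimpleGraph (Fin n)) [DecidableRel G.Adj]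
    (p : ℕ) (hp : 1 ≤ p) (β γ : Fin p → ℝ)
    (hcrit : fderiv ℝ (energyE n G p) (β, γ) = 0) :
    let Γ := padded (β, γ) (Fin.last p) (Fin.last p)
    let b := pderiv' (pderiv' (energyE n G (p + 1)) (Sum.inr (Fin.last p)))
      (Sum.inl (Fin.last p)) Γ
    ((b : ℝ) : ℂ) =
        star (qaoaState n G β γ) ⬝ᵥ
          (commMat (commMat (hamB n) (hamC n G)) (hamC n G)).mulVec (qaoaState n G β γ) ∧
    pderiv' (pderiv' (energyE n G (p + 1)) (Sum.inr (Fin.last p))) (Sum.inr (Fin.last p)) Γ = 0 ∧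
    (b ≠ 0 →
      (hessian (energyE n G (p + 1)) Γ).det = -b ^ 2 * (hessian (energyE n G p) (β, γ)).det) := by
  intro Γ b
  have hΓ : Γ = padCLM p (β, γ) := padded_eq_padCLM (β, γ)
  have hb : b = pderiv' (pderiv' (energyE n G (p + 1)) (Sum.inr (Fin.last p)))
      (Sum.inl (Fin.last p)) (padCLM p (β, γ)) := by rw [← hΓ]
  have hΓ1 : Γ.1 (Fin.last p) = 0 := by
    rw [hΓ]
    simp [Fin.snoc_last]
  refine ⟨?_, ?_, ?_⟩
  · rw [hb]
    exact b_value G β γ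
  · refine pderiv_pderiv_gamma_zero G Γ hΓ1 (Sum.inr (Fin.last p)) ?_
    simp [coordDir]
  · intro hbne
    rw [hΓ, hb]
    exact det_hessian_pad G β γ (hb ▸ hbne)
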